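/- For every even integer n ≥ 6 there exists a probability distribution on the simple graphs with vertex set {1,...,n} that is pairwise independent but not matching independent. -/

import Mathlib

open scoped Classical

noncomputable def pr {n : ℕ} (μ : SimpleGraph (Fin n) → ℝ) (P : SimpleGraph (Fin n) → Prop) : ℝ :=
  ∑ G : SimpleGraph (Fin n), if P G then μ G else 0

def IsDist {n : ℕ} (μ : SimpleGraph (Fin n) → ℝ) : Prop :=
  (∀ G, 0 ≤ μ G) ∧ ∑ G : SimpleGraph (Fin n), μ G = 1

def PairwiseIndep {n : ℕ} (μ : SimpleGraph (Fin n) → ℝ) : Prop :=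
  ∀ u v x y : Fin n, u ≠ v → x ≠ y → u ≠ x → u ≠ y → v ≠ x → v ≠ y →
    pr μ (fun G => G.Adj u v ∧ G.Adj x y)
      = pr μ (fun G => G.Adj u v) * pr μ (fun G => G.Adj x y)

def IsMatchingSet {n : ℕ} (M : Finset (Sym2 (Fin n))) : Prop :=
  (∀ e ∈ M, ¬ e.IsDiag) ∧
    ∀ e ∈ M, ∀ f ∈ M, e ≠ f → ∀ v : Fin n, v ∈ e → v ∉ f

def MatchingIndep {n : ℕ} (μ : SimpleGraph (Fin n) → ℝ) : Prop :=
  ∀ M : Finset (Sym2 (Fin n)), IsMatchingSet M →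
    ∀ S ⊆ M, pr μ (fun G => ∀ e ∈ S, e ∈ G.edgeSet)
      = ∏ e ∈ S, pr μ (fun G => e ∈ G.edgeSet)

noncomputable def myμ {n : ℕ} (G1 G2 G3 : SimpleGraph (Fin n)) :
    SimpleGraph (Fin n) → ℝ := fun G =>
  (if G = ⊥ then 1/4 else 0) + (if G = G1 then 1/4 else 0)
    + (if G = G2 then 1/4 else 0) + (if G = G3 then 1/4 else 0)

lemma sum_ite_pt {n : ℕ} (P : SimpleGraph (Fin n) → Prop) (X : SimpleGraph (Fin n)) (c : ℝ) :
    ∑ G : SimpleGraph (Fin n), (if P G then (if G = X then c else 0) else 0)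
      = if P X then c else 0 := by
  have h : ∀ G : SimpleGraph (Fin n),
      (if P G then (if G = X then c else 0) else 0)
        = if G = X then (if P X then c else 0) else 0 := by
    intro G
    by_cases h : G = X
    · subst h; simp
    · simp [h]
  rw [Finset.sum_congr rfl (fun G _ => h G)]
  simp

lemma pr_myμ {n : ℕ} (G1 G2 G3 : SimpleGraph (Fin n)) (P : SimpleGraph (Fin n) → Prop) :
    pr (myμ G1 G2 G3) P
      = (if P ⊥ then 1/4 else 0) + (if P G1 then 1/4 else 0)
          + (if P G2 then 1/4 else 0) + (if P G3 then 1/4 else 0) := by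
  unfold pr myμ
  have h : ∀ G : SimpleGraph (Fin n),
      (if P G then
        (if G = ⊥ then (1:ℝ)/4 else 0) + (if G = G1 then 1/4 else 0)
          + (if G = G2 then 1/4 else 0) + (if G = G3 then 1/4 else 0) else 0)
      = (if P G then (if G = ⊥ then (1:ℝ)/4 else 0) else 0)
        + (if P G then (if G = G1 then (1:ℝ)/4 else 0) else 0)
        + (if P G then (if G = G2 then (1:ℝ)/4 else 0) else 0)
        + (if P G then (if G = G3 then (1:ℝ)/4 else 0) else 0) := by
    intro G; by_cases h : P G <;> simp [h]
  rw [Finset.sum_congr rfl (fun G _ => h G)]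
  rw [Finset.sum_add_distrib, Finset.sum_add_distrib, Finset.sum_add_distrib,
    sum_ite_pt, sum_ite_pt, sum_ite_pt, sum_ite_pt]

set_option maxHeartbeats 2000000 in
theorem main_aux {n : ℕ} (a b c d e f : Fin n)
    (hab : a ≠ b) (hac : a ≠ c) (had : a ≠ d) (hae : a ≠ e) (haf : a ≠ f)
    (hbc : b ≠ c) (hbd : b ≠ d) (hbe : b ≠ e) (hbf : b ≠ f)
    (hcd : c ≠ d) (hce : c ≠ e) (hcf : c ≠ f)
    (hde : d ≠ e) (hdf : d ≠ f) (hef : e ≠ f) :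
    ∃ μ : SimpleGraph (Fin n) → ℝ, IsDist μ ∧ PairwiseIndep μ ∧ ¬ MatchingIndep μ := by
  set e1 : Sym2 (Fin n) := s(a,b) with he1
  set e2 : Sym2 (Fin n) := s(c,d) with he2
  set e3 : Sym2 (Fin n) := s(e,f) with he3
  set G1 : SimpleGraph (Fin n) := SimpleGraph.fromEdgeSet {e2, e3} with hG1
  set G2 : SimpleGraph (Fin n) := SimpleGraph.fromEdgeSet {e1, e3} with hG2
  set G3 : SimpleGraph (Fin n) := SimpleGraph.fromEdgeSet {e1, e2} with hG3
  have E12 : e1 ≠ e2 := by simp [he1, he2, Sym2.eq_iff, hac, had, hbc, hbd]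
  have E13 : e1 ≠ e3 := by simp [he1, he3, Sym2.eq_iff, hae, haf, hbe, hbf]
  have E23 : e2 ≠ e3 := by simp [he2, he3, Sym2.eq_iff, hce, hcf, hde, hdf]
  refine ⟨myμ G1 G2 G3, ⟨?_, ?_⟩, ?_, ?_⟩
  · -- nonneg
    intro G
    unfold myμ
    split_ifs <;> norm_num
  · -- sums to 1
    have h := pr_myμ G1 G2 G3 (fun _ => True)
    unfold pr at h
    simp only [if_true] at h
    rw [h]; norm_num
  · -- PairwiseIndep
    intro u v x y huv hxy hux huy hvx hvy
    have huvxy : s(u,v) ≠ s(x,y) := by simp [Sym2.eq_iff, hux, huy, hvx, hvy]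
    rw [pr_myμ, pr_myμ, pr_myμ]
    simp only [hG1, hG2, hG3, SimpleGraph.bot_adj, SimpleGraph.fromEdgeSet_adj,
      Set.mem_insert_iff, Set.mem_singleton_iff, false_and, and_false, if_false,
      ne_eq, huv, hxy, not_false_iff, and_true]
    by_cases h1 : s(u,v) = e1 <;> by_cases h2 : s(u,v) = e2 <;> by_cases h3 : s(u,v) = e3 <;>
      by_cases h4 : s(x,y) = e1 <;> by_cases h5 : s(x,y) = e2 <;> by_cases h6 : s(x,y) = e3 <;>
      simp_all [-Sym2.eq] <;> norm_num
  · -- not MatchingIndep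
    intro hMI
    have hM : IsMatchingSet ({e1, e2, e3} : Finset (Sym2 (Fin n))) := by
      constructor
      · intro x hx
        simp only [Finset.mem_insert, Finset.mem_singleton] at hx
        rcases hx with rfl | rfl | rfl <;>
          simp [he1, he2, he3, Sym2.mk_isDiag_iff, hab, hcd, hef]
      · intro x hx y hy hxy v hv
        simp only [Finset.mem_insert, Finset.mem_singleton] at hx hy
        rcases hx with rfl | rfl | rfl <;> rcases hy with rfl | rfl | rfl <;>
          simp only [he1, he2, he3, Sym2.mem_iff] at hv ⊢ <;>
          rcases hv with rfl | rfl <;>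
          simp_all [eq_comm]
    have h := hMI {e1, e2, e3} hM {e1, e2, e3} (Finset.Subset.refl _)
    rw [pr_myμ] at h
    rw [show ({e1, e2, e3} : Finset (Sym2 (Fin n))) = insert e1 (insert e2 {e3}) from rfl,
      Finset.prod_insert (by simp [E12, E13]),
      Finset.prod_insert (by simp [E23]), Finset.prod_singleton] at h
    rw [pr_myμ, pr_myμ, pr_myμ] at h
    simp only [hG1, hG2, hG3, SimpleGraph.edgeSet_fromEdgeSet, SimpleGraph.edgeSet_bot,
      Finset.mem_insert, Finset.mem_singleton, Set.mem_diff, Set.mem_insert_iff,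
      Set.mem_singleton_iff, Set.mem_setOf_eq, Set.mem_empty_iff_false,
      forall_eq_or_imp, forall_eq] at h
    simp only [he1, he2, he3, Sym2.mk_isDiag_iff, hab, hcd, hef, not_false_iff, and_true] at h
    simp [-Sym2.eq, E12, E13, E23, Ne.symm E12, Ne.symm E13, Ne.symm E23,
      hab, hac, had, hae, haf, hbc, hbd, hbe, hbf, hcd, hce, hcf, hde, hdf, hef,
      Ne.symm hab, Ne.symm hac, Ne.symm had, Ne.symm hae, Ne.symm haf, Ne.symm hbc, Ne.symm hbd, Ne.symm hbe, Ne.symm hbf, Ne.symm hcd, Ne.symm hce, Ne.symm hcf, Ne.symm hde, Ne.symm hdf, Ne.symm hef] at h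
    try norm_num at h
    split_ifs at h <;> norm_num at h <;> aesop

theorem pairwise_not_matching (n : ℕ) (hn : 6 ≤ n) (he : Even n) :
    ∃ μ : SimpleGraph (Fin n) → ℝ, IsDist μ ∧ PairwiseIndep μ ∧ ¬ MatchingIndep μ := by
  exact main_aux ⟨0, by omega⟩ ⟨1, by omega⟩ ⟨2, by omega⟩ ⟨3, by omega⟩ ⟨4, by omega⟩ ⟨5, by omega⟩
    (by simp [Fin.ext_iff]) (by simp [Fin.ext_iff]) (by simp [Fin.ext_iff]) (by simp [Fin.ext_iff])
    (by simp [Fin.ext_iff]) (by simp [Fin.ext_iff]) (by simp [Fin.ext_iff]) (by simp [Fin.ext_iff])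
    (by simp [Fin.ext_iff]) (by simp [Fin.ext_iff]) (by simp [Fin.ext_iff]) (by simp [Fin.ext_iff])
    (by simp [Fin.ext_iff]) (by simp [Fin.ext_iff]) (by simp [Fin.ext_iff])
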